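/- Let H be a cyclic group of order pq where p < q are distinct primes. Then the power graph 𝒫(H) is isomorphic to the join (K_{p-1} ∪ K_{q-1}) + K_{φ(pq)+1}, where φ is Euler's totient function. -/

import Mathlib

open Matrix

/-- The power graph of a group: distinct `x`, `y` are adjacent iff one is a positive power of
the other (equivalently, a natural power of the other, in a finite group). -/
def powerGraph (H : Type*) [Monoid H] : SimpleGraph H :=
  SimpleGraph.fromRel (fun x y => ∃ n : ℕ, x = y ^ n)

/-- The join `G + H` of two disjoint graphs. -/
def graphJoin {α β : Type*} (G : SimpleGraph α) (H : SimpleGraph β) : SimpleGraph (α ⊕ β) where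
  Adj u v := match u, v with
    | Sum.inl u, Sum.inl v => G.Adj u v
    | Sum.inr u, Sum.inr v => H.Adj u v
    | Sum.inl _, Sum.inr _ => True
    | Sum.inr _, Sum.inl _ => True
  symm := ⟨fun u v => match u, v with
    | Sum.inl _, Sum.inl _ => G.adj_symm
    | Sum.inr _, Sum.inr _ => H.adj_symm
    | Sum.inl _, Sum.inr _ => fun _ => trivial
    | Sum.inr _, Sum.inl _ => fun _ => trivial⟩
  loopless := ⟨fun u => match u with
    | Sum.inl u => G.loopless.irrefl u
    | Sum.inr u => H.loopless.irrefl u⟩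

open Subgroup in
lemma exists_pow_eq_of_orderOf_dvd' {H : Type*} [Group H] [Fintype H] (hH : IsCyclic H)
    {x y : H} (h : orderOf x ∣ orderOf y) : ∃ n : ℕ, x = y ^ n := by
  classical
  haveI := hH
  suffices hx : x ∈ zpowers y by
    obtain ⟨n, hn⟩ := (mem_powers_iff_mem_zpowers).mpr hx
    exact ⟨n, hn.symm⟩
  set d := orderOf y with hd
  have hd0 : 0 < d := orderOf_pos y
  have hsub : (zpowers y : Set H).toFinset ⊆ Finset.univ.filter (fun a => a ^ d = 1) := by
    intro z hz
    rw [Set.mem_toFinset] at hz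
    obtain ⟨k, rfl⟩ := hz
    simp only [Finset.mem_filter, Finset.mem_univ, true_and]
    rw [← zpow_natCast (y ^ k) d, ← _root_.zpow_mul, mul_comm, _root_.zpow_mul, zpow_natCast,
      pow_orderOf_eq_one, _root_.one_zpow]
  have hcard1 : (Set.toFinset (zpowers y : Set H)).card = d := by
    simp [Set.toFinset_card, Fintype.card_zpowers]
    rfl
  have hle : (Finset.univ.filter (fun a : H => a ^ d = 1)).card ≤ d := by
    have := IsCyclic.card_pow_eq_one_le (α := H) hd0
    convert this using 2
  have heq := Finset.eq_of_subset_of_card_le hsub (by rw [hcard1]; exact hle)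
  have hxmem : x ∈ Finset.univ.filter (fun a : H => a ^ d = 1) := by
    simp only [Finset.mem_filter, Finset.mem_univ, true_and]
    exact orderOf_dvd_iff_pow_eq_one.mp h
  rw [← heq, Set.mem_toFinset] at hxmem
  exact hxmem

lemma powerGraph_adj_iff' {H : Type*} [Group H] [Fintype H] (hH : IsCyclic H) (x y : H) :
    (powerGraph H).Adj x y ↔ x ≠ y ∧ (orderOf x ∣ orderOf y ∨ orderOf y ∣ orderOf x) := by
  constructor
  · rintro ⟨hne, h | h⟩
    · obtain ⟨n, rfl⟩ := h; exact ⟨hne, Or.inl (orderOf_pow_dvd n)⟩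
    · obtain ⟨n, rfl⟩ := h; exact ⟨hne, Or.inr (orderOf_pow_dvd n)⟩
  · rintro ⟨hne, h | h⟩
    · exact ⟨hne, Or.inl (exists_pow_eq_of_orderOf_dvd' hH h)⟩
    · exact ⟨hne, Or.inr (exists_pow_eq_of_orderOf_dvd' hH h)⟩

/-- For a cyclic group `H` of order `pq` (`p < q` distinct primes), the power graph `𝒫(H)` is
isomorphic to `(K_{p-1} ∪ K_{q-1}) + K_{φ(pq)+1}`. -/
theorem powerGraph_cyclic_pq {H : Type*} [Group H] [Fintype H] (hH : IsCyclic H)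
    (p q : ℕ) (hp : p.Prime) (hq : q.Prime) (hpq : p < q)
    (hcard : Fintype.card H = p * q) :
    Nonempty (powerGraph H ≃g
      graphJoin ((⊤ : SimpleGraph (Fin (p - 1))) ⊕g (⊤ : SimpleGraph (Fin (q - 1))))
        (⊤ : SimpleGraph (Fin ((p * q).totient + 1)))) := by
  classical
  haveI := hH
  have hpq' : p ≠ q := hpq.ne
  have hcop : Nat.Coprime p q := (Nat.coprime_primes hp hq).mpr hpq'
  have hclass : ∀ d : ℕ, d ∣ p * q → d = 1 ∨ d = p ∨ d = q ∨ d = p * q := by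
    intro d hd
    by_cases hpd : p ∣ d
    · obtain ⟨e, rfl⟩ := hpd
      have he : e ∣ q := (mul_dvd_mul_iff_left (a := p) (by exact_mod_cast hp.pos.ne')).mp hd
      rcases hq.eq_one_or_self_of_dvd e he with rfl | rfl
      · right; left; simp
      · right; right; right; rfl
    · have hdq : d ∣ q := by
        have hco : Nat.Coprime d p := ((Nat.Prime.coprime_iff_not_dvd hp).mpr hpd).symm
        exact (Nat.Coprime.dvd_of_dvd_mul_left hco hd)
      rcases hq.eq_one_or_self_of_dvd d hdq with rfl | rfl
      · left; rfl
      · right; right; left; rfl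
  have horder : ∀ x : H, orderOf x ∣ p * q := fun x => hcard ▸ orderOf_dvd_card
  set P : H → Prop := fun x => orderOf x = p with hP
  set Q : H → Prop := fun x => orderOf x = q with hQ
  have hdisj : Disjoint P Q := by
    rw [Pi.disjoint_iff]
    intro x
    by_cases h : orderOf x = p
    · have : ¬ Q x := fun h' => hpq' (h ▸ h' ▸ rfl)
      simp [this, Prop.disjoint_iff]
    · simp [hP, h, Prop.disjoint_iff]
  have cardP : Fintype.card {x : H // P x} = p - 1 := by
    rw [Fintype.card_subtype]
    have hdvd : p ∣ Fintype.card H := by rw [hcard]; exact dvd_mul_right p q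
    have h2 := IsCyclic.card_orderOf_eq_totient (α := H) hdvd
    rw [Nat.totient_prime hp] at h2
    convert h2 using 2
  have cardQ : Fintype.card {x : H // Q x} = q - 1 := by
    rw [Fintype.card_subtype]
    have hdvd : q ∣ Fintype.card H := by rw [hcard]; exact dvd_mul_left q p
    have h2 := IsCyclic.card_orderOf_eq_totient (α := H) hdvd
    rw [Nat.totient_prime hq] at h2
    convert h2 using 2
  have cardC : Fintype.card {x : H // ¬ (P x ∨ Q x)} = (p * q).totient + 1 := by
    rw [Fintype.card_subtype_compl, Fintype.card_subtype_or_disjoint _ _ hdisj, cardP, cardQ,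
      hcard]
    have ht : (p * q).totient = (p - 1) * (q - 1) := by
      rw [Nat.totient_mul hcop, Nat.totient_prime hp, Nat.totient_prime hq]
    rw [ht]
    obtain ⟨a, rfl⟩ : ∃ a, p = a + 2 := ⟨p - 2, by have := hp.two_le; omega⟩
    obtain ⟨b, rfl⟩ : ∃ b, q = b + 2 := ⟨q - 2, by have := hq.two_le; omega⟩
    have h1 : a + 2 - 1 = a + 1 := rfl
    have h2 : b + 2 - 1 = b + 1 := rfl
    rw [h1, h2]
    have hmul : (a + 2) * (b + 2) = (a + 1) * (b + 1) + 1 + (a + 1 + (b + 1)) := by ring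
    rw [hmul]
    omega
  let eA : {x : H // P x} ≃ Fin (p - 1) := Fintype.equivFinOfCardEq cardP
  let eB : {x : H // Q x} ≃ Fin (q - 1) := Fintype.equivFinOfCardEq cardQ
  let eC : {x : H // ¬ (P x ∨ Q x)} ≃ Fin ((p * q).totient + 1) := Fintype.equivFinOfCardEq cardC
  let E : ((Fin (p - 1) ⊕ Fin (q - 1)) ⊕ Fin ((p * q).totient + 1)) ≃ H :=
    (Equiv.sumCongr (Equiv.sumCongr eA.symm eB.symm) eC.symm).trans
      ((Equiv.sumCongr (subtypeOrEquiv P Q hdisj).symm (Equiv.refl _)).trans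
        (Equiv.sumCompl (fun x => P x ∨ Q x)))
  have hEll : ∀ i, E (Sum.inl (Sum.inl i)) = (eA.symm i).val := fun i => rfl
  have hElr : ∀ j, E (Sum.inl (Sum.inr j)) = (eB.symm j).val := fun j => rfl
  have hEr : ∀ k, E (Sum.inr k) = (eC.symm k).val := fun k => rfl
  have hOl : ∀ i, orderOf (E (Sum.inl (Sum.inl i))) = p := fun i => (eA.symm i).prop
  have hOr : ∀ j, orderOf (E (Sum.inl (Sum.inr j))) = q := fun j => (eB.symm j).prop
  have hOc : ∀ k, orderOf (E (Sum.inr k)) = 1 ∨ orderOf (E (Sum.inr k)) = p * q := by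
    intro k
    have hprop : ¬ (P (E (Sum.inr k)) ∨ Q (E (Sum.inr k))) := (eC.symm k).prop
    rcases hclass _ (horder (E (Sum.inr k))) with h | h | h | h
    · exact Or.inl h
    · exact absurd (Or.inl h) hprop
    · exact absurd (Or.inr h) hprop
    · exact Or.inr h
  have hdvdC : ∀ (x z : H), (orderOf x = 1 ∨ orderOf x = p * q) →
      orderOf z ∣ orderOf x ∨ orderOf x ∣ orderOf z := by
    rintro x z (h | h)
    · right; rw [h]; exact one_dvd _
    · left; rw [h]; exact horder z
  have hsolve : ∀ (r : ℕ) (k : Fin ((p * q).totient + 1)), r ∣ p * q →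
      (r ∣ orderOf (E (Sum.inr k)) ∨ orderOf (E (Sum.inr k)) ∣ r) := by
    intro r k hr
    rcases hOc k with h | h
    · right; rw [h]; exact one_dvd _
    · left; rw [h]; exact hr
  have hnd1 : ¬ p ∣ q := fun h => hpq' ((Nat.prime_dvd_prime_iff_eq hp hq).mp h)
  have hnd2 : ¬ q ∣ p := fun h => hpq' (((Nat.prime_dvd_prime_iff_eq hq hp).mp h).symm)
  have adjE : ∀ u v, (powerGraph H).Adj (E u) (E v) ↔
      u ≠ v ∧ (orderOf (E u) ∣ orderOf (E v) ∨ orderOf (E v) ∣ orderOf (E u)) := by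
    intro u v
    rw [powerGraph_adj_iff' hH, ne_eq, Equiv.apply_eq_iff_eq, ← ne_eq]
  refine ⟨SimpleGraph.Iso.symm ⟨E, ?_⟩⟩
  intro u v
  rcases u with (i | j) | k <;> rcases v with (i' | j') | k' <;>
    rw [adjE] <;>
    simp only [hOl, hOr, graphJoin, SimpleGraph.sum_adj, SimpleGraph.top_adj, ne_eq,
      Sum.inl.injEq, Sum.inr.injEq]
  · simp
  · simp [hnd1, hnd2]
  · simp only [iff_true]
    exact ⟨by simp, hsolve p k' (dvd_mul_right p q)⟩
  · simp [hnd1, hnd2]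
  · simp
  · simp only [iff_true]
    exact ⟨by simp, hsolve q k' (dvd_mul_left q p)⟩
  · simp only [iff_true]
    exact ⟨by simp, (hsolve p k (dvd_mul_right p q)).symm⟩
  · simp only [iff_true]
    exact ⟨by simp, (hsolve q k (dvd_mul_left q p)).symm⟩
  · constructor
    · rintro ⟨h, -⟩; simpa using h
    · intro h
      refine ⟨by simpa using h, ?_⟩
      rcases hdvdC _ (E (Sum.inr k)) (hOc k') with h' | h'
      · exact Or.inl h'
      · exact Or.inr h'
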